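/- For the symmetric BAR transition kernel 𝒬 on ℝ given by 𝒬(x,·) = 𝒩(ax, σ²) with a ∈ (−1,1), σ > 0, and its invariant probability measure μ = 𝒩(0, σ²/(1−a²)), the kernel 𝒬 is L²(μ)-exponentially convergent with rate |a|: there exists a finite constant M such that for all f ∈ L²(μ) and all n ∈ ℕ, ‖𝒬^n f − ⟨μ,f⟩‖_{L²(μ)} ≤ M |a|^n ‖f‖_{L²(μ)}. -/

import Mathlib

open MeasureTheory ProbabilityTheory
open Real Function
open scoped ENNReal NNReal


/-- The symmetric BAR transition kernel `𝒬(x,·) = 𝒩(ax, σ²)` acting on functions: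
`𝒬f(x) = ∫ f(y) 𝒬(x,dy)`. -/
noncomputable def barQfun (a σ : ℝ) (f : ℝ → ℝ) (x : ℝ) : ℝ :=
  ∫ y, f y ∂(gaussianReal (a * x) (Real.toNNReal (σ ^ 2)))

/-- `𝒬ⁿ f`, by iteration of `barQfun`. -/
noncomputable def barQfunIter (a σ : ℝ) (n : ℕ) (f : ℝ → ℝ) : ℝ → ℝ :=
  (barQfun a σ)^[n] f

noncomputable def gpdf (m v x : ℝ) : ℝ :=
  (Real.sqrt (2 * Real.pi * v))⁻¹ * Real.exp (-(x - m) ^ 2 / (2 * v))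

lemma gpdf_nonneg (m v x : ℝ) : 0 ≤ gpdf m v x := by
  unfold gpdf; positivity

lemma gpdf_pos {v : ℝ} (hv : 0 < v) (m x : ℝ) : 0 < gpdf m v x := by
  unfold gpdf
  have : 0 < Real.sqrt (2 * Real.pi * v) := Real.sqrt_pos.2 (by positivity)
  positivity

lemma measurable_gpdf (m v : ℝ) : Measurable (gpdf m v) := by
  unfold gpdf; fun_prop

lemma gpdf_eq_pdfReal {v : ℝ} (hv : 0 < v) (m x : ℝ) :
    gpdf m v x = gaussianPDFReal m v.toNNReal x := by
  unfold gpdf gaussianPDFReal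
  rw [Real.coe_toNNReal _ hv.le]

lemma gaussianReal_eq_withDensity {v : ℝ} (hv : 0 < v) (m : ℝ) :
    gaussianReal m v.toNNReal
      = volume.withDensity (fun x => ENNReal.ofReal (gpdf m v x)) := by
  rw [gaussianReal_of_var_ne_zero m (by simp [Real.toNNReal_eq_zero, not_le, hv])]
  congr 1
  ext x
  rw [gaussianPDF_def, gpdf_eq_pdfReal hv]

lemma integral_gaussianReal {v : ℝ} (hv : 0 < v) (m : ℝ) (g : ℝ → ℝ) :
    ∫ y, g y ∂(gaussianReal m v.toNNReal) = ∫ y, gpdf m v y * g y := by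
  rw [gaussianReal_eq_withDensity hv m]
  have : (fun x => ENNReal.ofReal (gpdf m v x))
      = fun x => ((fun y => (gpdf m v y).toNNReal) x : ℝ≥0∞) := by
    ext x; simp [ENNReal.ofReal]
  rw [this, integral_withDensity_eq_integral_smul]
  · apply integral_congr_ae
    filter_upwards with y
    simp [NNReal.smul_def, Real.coe_toNNReal _ (gpdf_nonneg m v y)]
  · exact (measurable_gpdf m v).real_toNNReal

lemma integrable_gaussianReal_iff {v : ℝ} (hv : 0 < v) (m : ℝ) (g : ℝ → ℝ) :
    Integrable g (gaussianReal m v.toNNReal)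
      ↔ Integrable (fun y => gpdf m v y * g y) volume := by
  rw [gaussianReal_eq_withDensity hv m]
  have : (fun x => ENNReal.ofReal (gpdf m v x))
      = fun x => ((fun y => (gpdf m v y).toNNReal) x : ℝ≥0∞) := by
    ext x; simp [ENNReal.ofReal]
  rw [this, integrable_withDensity_iff_integrable_smul
    ((measurable_gpdf m v).real_toNNReal)]
  constructor <;> intro h <;> apply h.congr <;>
    · filter_upwards with y
      simp [NNReal.smul_def, Real.coe_toNNReal _ (gpdf_nonneg m v y)]

/-- The basic completed-square Gaussian integral. -/
lemma integrable_exp_quad {α : ℝ} (hα : 0 < α) (β γ : ℝ) :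
    Integrable (fun y => Real.exp (β * y + γ - α * y ^ 2)) volume := by
  have hrw : (fun y => Real.exp (β * y + γ - α * y ^ 2))
      = fun y => Real.exp (β ^ 2 / (4 * α) + γ) *
          Real.exp (-α * (y - β / (2 * α)) ^ 2) := by
    ext y
    rw [← Real.exp_add]
    congr 1
    field_simp
    ring
  rw [hrw]
  exact ((integrable_exp_neg_mul_sq hα).comp_sub_right (β / (2 * α))).const_mul _

lemma integral_exp_quad {α : ℝ} (hα : 0 < α) (β γ : ℝ) :
    ∫ y, Real.exp (β * y + γ - α * y ^ 2)
      = Real.sqrt (Real.pi / α) * Real.exp (β ^ 2 / (4 * α) + γ) := by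
  have hrw : (fun y => Real.exp (β * y + γ - α * y ^ 2))
      = fun y => Real.exp (β ^ 2 / (4 * α) + γ) *
          Real.exp (-α * (y - β / (2 * α)) ^ 2) := by
    ext y
    rw [← Real.exp_add]
    congr 1
    field_simp
    ring
  rw [hrw, MeasureTheory.integral_const_mul,
    integral_sub_right_eq_self (fun y => Real.exp (-α * y ^ 2)) (β / (2 * α)),
    integral_gaussian, mul_comm]

lemma gpdf_conv {v w : ℝ} (hv : 0 < v) (hw : 0 < w) (c m z : ℝ) :
    ∫ y, gpdf m v y * gpdf (c * y) w z = gpdf (c * m) (w + c ^ 2 * v) z := by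
  have hvne := hv.ne'
  have hwne := hw.ne'
  have hwc : 0 < w + c ^ 2 * v := by positivity
  have hwcne := hwc.ne'
  set α := 1 / (2 * v) + c ^ 2 / (2 * w) with hαdef
  have hα : 0 < α := by positivity
  have hαne := hα.ne'
  set β := m / v + c * z / w with hβdef
  set γ := -(m ^ 2 / (2 * v)) - z ^ 2 / (2 * w) with hγdef
  have hrw : (fun y => gpdf m v y * gpdf (c * y) w z) = fun y =>
      (Real.sqrt (2 * Real.pi * v))⁻¹ * ((Real.sqrt (2 * Real.pi * w))⁻¹
        * Real.exp (β * y + γ - α * y ^ 2)) := by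
    ext y
    unfold gpdf
    have he : β * y + γ - α * y ^ 2
        = -(y - m) ^ 2 / (2 * v) + -(z - c * y) ^ 2 / (2 * w) := by
      rw [hαdef, hβdef, hγdef]; field_simp; ring
    rw [he, Real.exp_add]; ring
  rw [hrw, MeasureTheory.integral_const_mul, MeasureTheory.integral_const_mul,
    integral_exp_quad hα]
  have hexp : β ^ 2 / (4 * α) + γ = -(z - c * m) ^ 2 / (2 * (w + c ^ 2 * v)) := by
    rw [hαdef, hβdef, hγdef]; field_simp; ring
  have hsq : (Real.sqrt (2 * Real.pi * v))⁻¹ * ((Real.sqrt (2 * Real.pi * w))⁻¹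
      * Real.sqrt (Real.pi / α)) = (Real.sqrt (2 * Real.pi * (w + c ^ 2 * v)))⁻¹ := by
    rw [← Real.sqrt_inv, ← Real.sqrt_inv, ← Real.sqrt_inv,
      ← Real.sqrt_mul (by positivity), ← Real.sqrt_mul (by positivity)]
    congr 1
    rw [hαdef]
    field_simp
  unfold gpdf
  rw [hexp, ← hsq]
  ring

lemma ratio_eq {t v : ℝ} (ht : 0 < t) (hv : 0 < v) (m : ℝ) :
    (fun z => gpdf m v z ^ 2 / gpdf 0 t z)
      = fun z => (Real.sqrt (2 * Real.pi * t) / (2 * Real.pi * v))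
          * Real.exp ((2 * m / v) * z + (-(m ^ 2) / v)
              - (1 / v - 1 / (2 * t)) * z ^ 2) := by
  have hπ := Real.pi_pos
  have hsv : (0:ℝ) < Real.sqrt (2 * Real.pi * v) := Real.sqrt_pos.2 (by positivity)
  have hst : (0:ℝ) < Real.sqrt (2 * Real.pi * t) := Real.sqrt_pos.2 (by positivity)
  ext z
  rw [div_eq_iff (by unfold gpdf; positivity)]
  unfold gpdf
  rw [pow_two]
  have hconst : (Real.sqrt (2 * Real.pi * v))⁻¹ * (Real.sqrt (2 * Real.pi * v))⁻¹
      = (Real.sqrt (2 * Real.pi * t) / (2 * Real.pi * v)) * (Real.sqrt (2 * Real.pi * t))⁻¹ := by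
    rw [← mul_inv, Real.mul_self_sqrt (by positivity), div_mul_eq_mul_div,
      mul_inv_cancel₀ hst.ne', one_div]
  have hexp : Real.exp (-(z - m) ^ 2 / (2 * v)) * Real.exp (-(z - m) ^ 2 / (2 * v))
      = Real.exp ((2 * m / v) * z + (-(m ^ 2) / v) - (1 / v - 1 / (2 * t)) * z ^ 2)
        * Real.exp (-(z - 0) ^ 2 / (2 * t)) := by
    rw [← Real.exp_add, ← Real.exp_add]
    congr 1
    field_simp
    ring
  calc (Real.sqrt (2 * Real.pi * v))⁻¹ * Real.exp (-(z - m) ^ 2 / (2 * v))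
        * ((Real.sqrt (2 * Real.pi * v))⁻¹ * Real.exp (-(z - m) ^ 2 / (2 * v)))
      = ((Real.sqrt (2 * Real.pi * v))⁻¹ * (Real.sqrt (2 * Real.pi * v))⁻¹)
        * (Real.exp (-(z - m) ^ 2 / (2 * v)) * Real.exp (-(z - m) ^ 2 / (2 * v))) := by ring
    _ = _ := by rw [hconst, hexp]; ring

lemma integrable_ratio {t v : ℝ} (ht : 0 < t) (hv : 0 < v) (hv2 : v < 2 * t) (m : ℝ) : Integrable (fun z => gpdf m v z ^ 2 / gpdf 0 t z) volume := by
  rw [ratio_eq ht hv m]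
  have hα : (0:ℝ) < 1 / v - 1 / (2 * t) := by
    rw [sub_pos]
    apply one_div_lt_one_div_of_lt hv hv2
  exact (integrable_exp_quad hα _ _).const_mul _

lemma integral_ratio {t v : ℝ} (ht : 0 < t) (hv : 0 < v) (hv2 : v < 2 * t) (m : ℝ) :
    ∫ z, gpdf m v z ^ 2 / gpdf 0 t z
      = (t / Real.sqrt (v * (2 * t - v))) * Real.exp (m ^ 2 / (2 * t - v)) := by
  have hπ := Real.pi_pos
  have hα : (0:ℝ) < 1 / v - 1 / (2 * t) := by
    rw [sub_pos]; exact one_div_lt_one_div_of_lt hv hv2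
  have h2tv : (0:ℝ) < 2 * t - v := by linarith
  rw [ratio_eq ht hv m, MeasureTheory.integral_const_mul, integral_exp_quad hα]
  have hexp : (2 * m / v) ^ 2 / (4 * (1 / v - 1 / (2 * t))) + -(m ^ 2) / v
      = m ^ 2 / (2 * t - v) := by
    field_simp
    ring
  rw [hexp]
  have hconst : Real.sqrt (2 * Real.pi * t) / (2 * Real.pi * v)
        * Real.sqrt (Real.pi / (1 / v - 1 / (2 * t)))
      = t / Real.sqrt (v * (2 * t - v)) := by
    rw [div_mul_eq_mul_div, ← Real.sqrt_mul (by positivity),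
      show (2 * Real.pi * v : ℝ) = Real.sqrt ((2 * Real.pi * v) ^ 2) from
        (Real.sqrt_sq (by positivity)).symm,
      ← Real.sqrt_div (by positivity),
      show t / Real.sqrt (v * (2 * t - v)) = Real.sqrt (t ^ 2 / (v * (2 * t - v))) by
        rw [Real.sqrt_div (sq_nonneg t), Real.sqrt_sq ht.le]]
    congr 1
    field_simp
  rw [← hconst]
  ring


lemma integrable_chi {t ρ : ℝ} (ht : 0 < t) (hρ : 0 ≤ ρ) (hρ1 : ρ < 1) (c : ℝ) :
    Integrable (fun x => gpdf 0 t x * (c * Real.exp (ρ * x ^ 2 / (2 * t - t * (1 - ρ))))) volume := by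
  have hπ := Real.pi_pos
  have hα : (0:ℝ) < 1 / (2 * t) - ρ / (2 * t - t * (1 - ρ)) := by
    have h1 : 2 * t - t * (1 - ρ) = t * (1 + ρ) := by ring
    rw [h1, sub_pos, div_lt_div_iff₀ (by positivity) (by positivity)]
    nlinarith
  have hrw : (fun x => gpdf 0 t x * (c * Real.exp (ρ * x ^ 2 / (2 * t - t * (1 - ρ)))))
      = fun x => ((Real.sqrt (2 * Real.pi * t))⁻¹ * c)
          * Real.exp ((0:ℝ) * x + 0 - (1 / (2 * t) - ρ / (2 * t - t * (1 - ρ))) * x ^ 2) := by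
    ext x
    unfold gpdf
    rw [mul_mul_mul_comm, ← Real.exp_add]
    congr 2
    have h1 : 2 * t - t * (1 - ρ) = t * (1 + ρ) := by ring
    rw [h1]
    field_simp
    ring
  rw [hrw]
  exact (integrable_exp_quad hα _ _).const_mul _

lemma integral_chi {t ρ : ℝ} (ht : 0 < t) (hρ : 0 ≤ ρ) (hρ1 : ρ < 1) :
    ∫ x, gpdf 0 t x * ((t / Real.sqrt ((t * (1 - ρ)) * (2 * t - t * (1 - ρ))))
        * Real.exp (ρ * x ^ 2 / (2 * t - t * (1 - ρ))))
      = 1 / (1 - ρ) := by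
  have hπ := Real.pi_pos
  have h1ρ : (0:ℝ) < 1 - ρ := by linarith
  have hα : (0:ℝ) < 1 / (2 * t) - ρ / (2 * t - t * (1 - ρ)) := by
    have h1 : 2 * t - t * (1 - ρ) = t * (1 + ρ) := by ring
    rw [h1, sub_pos, div_lt_div_iff₀ (by positivity) (by positivity)]
    nlinarith
  set c := t / Real.sqrt ((t * (1 - ρ)) * (2 * t - t * (1 - ρ))) with hc
  have hrw : (fun x => gpdf 0 t x * (c * Real.exp (ρ * x ^ 2 / (2 * t - t * (1 - ρ)))))
      = fun x => ((Real.sqrt (2 * Real.pi * t))⁻¹ * c)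
          * Real.exp ((0:ℝ) * x + 0 - (1 / (2 * t) - ρ / (2 * t - t * (1 - ρ))) * x ^ 2) := by
    ext x
    unfold gpdf
    rw [mul_mul_mul_comm, ← Real.exp_add]
    congr 2
    have h1 : 2 * t - t * (1 - ρ) = t * (1 + ρ) := by ring
    rw [h1]
    field_simp
    ring
  rw [hrw, MeasureTheory.integral_const_mul, integral_exp_quad hα]
  rw [show ((0:ℝ) ^ 2 / (4 * (1 / (2 * t) - ρ / (2 * t - t * (1 - ρ)))) + 0) = 0 by simp,
    Real.exp_zero, mul_one, hc]
  have h1 : 2 * t - t * (1 - ρ) = t * (1 + ρ) := by ring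
  have h1ρ' : (0:ℝ) < 1 + ρ := by linarith
  rw [h1]
  rw [show t / Real.sqrt (t * (1 - ρ) * (t * (1 + ρ))) = Real.sqrt (t ^ 2 / (t * (1 - ρ) * (t * (1 + ρ)))) by
      rw [Real.sqrt_div (sq_nonneg t), Real.sqrt_sq ht.le],
    ← Real.sqrt_inv, ← Real.sqrt_mul (by positivity), ← Real.sqrt_mul (by positivity),
    show (1:ℝ) / (1 - ρ) = Real.sqrt ((1 / (1 - ρ)) ^ 2) by rw [Real.sqrt_sq (by positivity)]]
  congr 1
  have hαval : 1 / (2 * t) - ρ / (t * (1 + ρ)) = (1 - ρ) / (2 * t * (1 + ρ)) := by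
    field_simp
    ring
  rw [hαval]
  field_simp

lemma integrable_gpdf {v : ℝ} (hv : 0 < v) (m : ℝ) :
    Integrable (gpdf m v) volume := by
  have h := (integrable_gaussianReal_iff hv m (fun _ => (1:ℝ))).mp (integrable_const 1)
  simpa using h

lemma integral_gpdf {v : ℝ} (hv : 0 < v) (m : ℝ) : ∫ z, gpdf m v z = 1 := by
  have h := integral_gaussianReal hv m (fun _ => (1:ℝ))
  simpa using h.symm

/-- Any `L²(μ)` function is integrable w.r.t. every Gaussian with variance `< 2t`. -/
lemma integrable_of_memL2 {t v : ℝ} (ht : 0 < t) (hv : 0 < v) (hv2 : v < 2 * t) (m : ℝ)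
    {f : ℝ → ℝ} (hf : Measurable f)
    (hf2 : MemLp f 2 (gaussianReal 0 t.toNNReal)) :
    Integrable f (gaussianReal m v.toNNReal) := by
  rw [integrable_gaussianReal_iff hv]
  have hsq : Integrable (fun z => gpdf 0 t z * f z ^ 2) volume := by
    rw [← integrable_gaussianReal_iff ht]
    exact (memLp_two_iff_integrable_sq hf2.aestronglyMeasurable).mp hf2
  have hr := integrable_ratio ht hv hv2 m
  refine Integrable.mono ((hsq.const_mul (1/2)).add (hr.const_mul (1/2)))
    ((measurable_gpdf m v).mul hf).aestronglyMeasurable ?_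
  filter_upwards with z
  have h0 := gpdf_pos ht 0 z
  have hpv := gpdf_nonneg m v z
  rw [Real.norm_eq_abs, Real.norm_eq_abs, abs_mul, abs_of_nonneg hpv]
  have key : gpdf m v z * |f z| ≤ 1/2 * (gpdf 0 t z * f z ^ 2) + 1/2 * (gpdf m v z ^ 2 / gpdf 0 t z) := by
    have habs : f z ^ 2 = |f z| ^ 2 := (sq_abs _).symm
    rw [habs]
    have hmul : gpdf m v z * |f z| * gpdf 0 t z
        ≤ (1/2 * (gpdf 0 t z * |f z| ^ 2) + 1/2 * (gpdf m v z ^ 2 / gpdf 0 t z)) * gpdf 0 t z := by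
      have hrw2 : (1/2 * (gpdf 0 t z * |f z| ^ 2) + 1/2 * (gpdf m v z ^ 2 / gpdf 0 t z))
            * gpdf 0 t z
          = 1/2 * (gpdf 0 t z) ^ 2 * |f z| ^ 2 + 1/2 * gpdf m v z ^ 2 := by
        field_simp
      rw [hrw2]
      nlinarith [sq_nonneg (|f z| * gpdf 0 t z - gpdf m v z)]
    exact le_of_mul_le_mul_right hmul h0
  exact key.trans (le_abs_self _)

/-- Pointwise chi-square Cauchy–Schwarz bound. -/
lemma pointwise_CS {t v : ℝ} (ht : 0 < t) (hv : 0 < v) (hvt : v ≤ t) (m : ℝ)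
    {f : ℝ → ℝ} (hf : Measurable f)
    (hf2 : MemLp f 2 (gaussianReal 0 t.toNNReal)) :
    |(∫ z, f z ∂(gaussianReal m v.toNNReal)) - ∫ z, f z ∂(gaussianReal 0 t.toNNReal)|
      ≤ Real.sqrt (∫ z, (f z - ∫ y, f y ∂(gaussianReal 0 t.toNNReal)) ^ 2
            ∂(gaussianReal 0 t.toNNReal))
        * Real.sqrt ((t / Real.sqrt (v * (2 * t - v))) * Real.exp (m ^ 2 / (2 * t - v)) - 1) := by
  have hv2 : v < 2 * t := by linarith
  set μ := gaussianReal 0 t.toNNReal with hμ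
  set c := ∫ y, f y ∂μ with hc
  set r : ℝ → ℝ := fun z => gpdf m v z / gpdf 0 t z with hr
  have hrmeas : Measurable r := (measurable_gpdf m v).div (measurable_gpdf 0 t)
  have hrnn : ∀ z, 0 ≤ r z := fun z => div_nonneg (gpdf_nonneg _ _ _) (gpdf_nonneg _ _ _)
  have hp0 : ∀ z, gpdf 0 t z * r z = gpdf m v z := by
    intro z
    rw [hr, mul_div_cancel₀ _ (gpdf_pos ht 0 z).ne']
  -- key integral identities
  have key1 : ∫ z, f z ∂(gaussianReal m v.toNNReal) = ∫ z, r z * f z ∂μ := by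
    rw [integral_gaussianReal hv, integral_gaussianReal ht]
    congr 1; ext z
    rw [← mul_assoc, hp0 z]
  have key2 : ∫ z, r z ∂μ = 1 := by
    rw [integral_gaussianReal ht]
    simp_rw [hp0]
    exact integral_gpdf hv m
  have hratio_eq : ∀ z, gpdf 0 t z * (r z * r z) = gpdf m v z ^ 2 / gpdf 0 t z := by
    intro z
    have h0 := (gpdf_pos ht 0 z).ne'
    simp only [hr]
    field_simp
  have key3 : ∫ z, r z ^ 2 ∂μ
      = (t / Real.sqrt (v * (2 * t - v))) * Real.exp (m ^ 2 / (2 * t - v)) := by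
    rw [integral_gaussianReal ht, ← integral_ratio ht hv hv2 m]
    congr 1; ext z
    rw [← hratio_eq z]
    ring
  -- integrability
  have int_r : Integrable r μ := by
    rw [integrable_gaussianReal_iff ht]
    apply (integrable_gpdf hv m).congr
    filter_upwards with z using (hp0 z).symm
  have int_r2 : Integrable (fun z => r z ^ 2) μ := by
    rw [integrable_gaussianReal_iff ht]
    apply (integrable_ratio ht hv hv2 m).congr
    filter_upwards with z
    rw [← hratio_eq z]
    ring
  have int_f : Integrable f μ := by
    have := integrable_of_memL2 ht ht (by linarith) 0 hf hf2
    simpa [hμ] using this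
  have int_rf : Integrable (fun z => r z * f z) μ := by
    have h1 := integrable_of_memL2 ht hv hv2 m hf hf2
    rw [integrable_gaussianReal_iff hv] at h1
    rw [integrable_gaussianReal_iff ht]
    apply h1.congr
    filter_upwards with z
    rw [← mul_assoc, hp0 z]
  -- the centered identity
  have intA : Integrable (fun z => r z * f z - c * r z) μ := int_rf.sub (int_r.const_mul c)
  have intB : Integrable (fun z => f z - c) μ := int_f.sub (integrable_const c)
  have identity : (∫ z, f z ∂(gaussianReal m v.toNNReal)) - c
      = ∫ z, (f z - c) * (r z - 1) ∂μ := by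
    calc (∫ z, f z ∂(gaussianReal m v.toNNReal)) - c
        = (∫ z, r z * f z ∂μ) - c := by rw [key1]
      _ = ((∫ z, r z * f z ∂μ) - c * ∫ z, r z ∂μ) - ((∫ z, f z ∂μ) - c) := by
          rw [key2, hc]; ring
      _ = ((∫ z, r z * f z ∂μ) - ∫ z, c * r z ∂μ) - ((∫ z, f z ∂μ) - ∫ z, (fun _ => c) z ∂μ) := by
          rw [MeasureTheory.integral_const_mul]
          simp [measure_univ]
      _ = (∫ z, r z * f z - c * r z ∂μ) - ∫ z, f z - c ∂μ := by
          rw [integral_sub int_rf (int_r.const_mul c), integral_sub int_f (integrable_const c)]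
      _ = ∫ z, (f z - c) * (r z - 1) ∂μ := by
          rw [← integral_sub intA intB]
          congr 1; ext z; ring
  rw [identity]
  -- Cauchy-Schwarz via Hölder
  have habs : |∫ z, (f z - c) * (r z - 1) ∂μ| ≤ ∫ z, |f z - c| * |r z - 1| ∂μ := by
    rw [← Real.norm_eq_abs]
    refine (norm_integral_le_integral_norm _).trans ?_
    apply le_of_eq
    congr 1; ext z
    rw [Real.norm_eq_abs, abs_mul]
  refine habs.trans ?_
  have hpq : Real.HolderConjugate 2 2 := Real.HolderConjugate.two_two
  have hmemh : MemLp (fun z => |f z - c|) 2 μ := by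
    rw [memLp_two_iff_integrable_sq (f := fun z => |f z - c|) ((hf.sub measurable_const).abs.aestronglyMeasurable)]
    have hgoal : Integrable (fun z => (f z - c) ^ 2) μ :=
      (memLp_two_iff_integrable_sq (hf.sub measurable_const).aestronglyMeasurable).mp
        (hf2.sub (memLp_const c))
    apply hgoal.congr
    filter_upwards with z
    rw [sq_abs]
  have int_rm1sq : Integrable (fun z => (r z - 1) ^ 2) μ := by
    have : (fun z => (r z - 1) ^ 2) = fun z => (r z ^ 2 - 2 * r z) + 1 := by ext z; ring
    rw [this]
    exact (int_r2.sub (int_r.const_mul 2)).add (integrable_const 1)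
  have hmemr : MemLp (fun z => |r z - 1|) 2 μ := by
    rw [memLp_two_iff_integrable_sq]
    · apply int_rm1sq.congr
      filter_upwards with z
      rw [sq_abs]
    · exact (hrmeas.sub measurable_const).abs.aestronglyMeasurable
  have hH := integral_mul_le_Lp_mul_Lq_of_nonneg hpq
    (Filter.Eventually.of_forall fun z => abs_nonneg (f z - c))
    (Filter.Eventually.of_forall fun z => abs_nonneg (r z - 1))
    (by rwa [show ENNReal.ofReal 2 = 2 by norm_num]) (by rwa [show ENNReal.ofReal 2 = 2 by norm_num])
  refine hH.trans ?_
  have e1 : ∫ z, |f z - c| ^ (2:ℝ) ∂μ = ∫ z, (f z - c) ^ 2 ∂μ := by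
    congr 1; ext z
    rw [show ((2:ℝ)) = ((2:ℕ):ℝ) by norm_num, Real.rpow_natCast, sq_abs]
  have e2 : ∫ z, |r z - 1| ^ (2:ℝ) ∂μ
      = (t / Real.sqrt (v * (2 * t - v))) * Real.exp (m ^ 2 / (2 * t - v)) - 1 := by
    have : ∫ z, |r z - 1| ^ (2:ℝ) ∂μ = ∫ z, (r z - 1) ^ 2 ∂μ := by
      congr 1; ext z
      rw [show ((2:ℝ)) = ((2:ℕ):ℝ) by norm_num, Real.rpow_natCast, sq_abs]
    rw [this]
    have intC : Integrable (fun z => r z ^ 2 - 2 * r z) μ := int_r2.sub (int_r.const_mul 2)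
    calc ∫ z, (r z - 1) ^ 2 ∂μ
        = ∫ z, (r z ^ 2 - 2 * r z) + 1 ∂μ := by congr 1; ext z; ring
      _ = (∫ z, r z ^ 2 - 2 * r z ∂μ) + ∫ _, (1:ℝ) ∂μ := integral_add intC (integrable_const 1)
      _ = ((∫ z, r z ^ 2 ∂μ) - ∫ z, 2 * r z ∂μ) + 1 := by
          rw [integral_sub int_r2 (int_r.const_mul 2)]
          simp [measure_univ]
      _ = t / Real.sqrt (v * (2 * t - v)) * Real.exp (m ^ 2 / (2 * t - v)) - 1 := by
          rw [key3, MeasureTheory.integral_const_mul, key2]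
          ring
  rw [e1, e2, ← Real.sqrt_eq_rpow, ← Real.sqrt_eq_rpow]

lemma gpdf_le {w : ℝ} (hw : 0 < w) (m x : ℝ) :
    gpdf m w x ≤ (Real.sqrt (2 * Real.pi * w))⁻¹ := by
  unfold gpdf
  have h1 : Real.exp (-(x - m) ^ 2 / (2 * w)) ≤ 1 := by
    apply Real.exp_le_one_iff.mpr
    apply div_nonpos_of_nonpos_of_nonneg (neg_nonpos.mpr (sq_nonneg _)) (by positivity)
  have h2 : (0:ℝ) ≤ (Real.sqrt (2 * Real.pi * w))⁻¹ := by positivity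
  calc (Real.sqrt (2 * Real.pi * w))⁻¹ * Real.exp (-(x - m) ^ 2 / (2 * w))
      ≤ (Real.sqrt (2 * Real.pi * w))⁻¹ * 1 := by
        exact mul_le_mul_of_nonneg_left h1 h2
    _ = _ := mul_one _

/-- Composition of Gaussian integral kernels. -/
lemma gauss_comp {t v w c : ℝ} (ht : 0 < t) (hv : 0 < v) (hw : 0 < w)
    (hwc : w + c ^ 2 * v < 2 * t) (m : ℝ) {f : ℝ → ℝ} (hf : Measurable f)
    (hf2 : MemLp f 2 (gaussianReal 0 t.toNNReal)) :
    ∫ y, (∫ z, f z ∂(gaussianReal (c * y) w.toNNReal)) ∂(gaussianReal m v.toNNReal)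
      = ∫ z, f z ∂(gaussianReal (c * m) (w + c ^ 2 * v).toNNReal) := by
  have hwc0 : 0 < w + c ^ 2 * v := by positivity
  set F : ℝ → ℝ → ℝ := fun y z => gpdf m v y * (gpdf (c * y) w z * f z) with hF
  have hFmeas : AEStronglyMeasurable (uncurry F) (volume.prod volume) := by
    apply Measurable.aestronglyMeasurable
    unfold F
    unfold uncurry gpdf
    fun_prop
  have habs2 : MemLp (fun z => |f z|) 2 (gaussianReal 0 t.toNNReal) := by
    rw [memLp_two_iff_integrable_sq hf.abs.aestronglyMeasurable]
    have := (memLp_two_iff_integrable_sq hf2.aestronglyMeasurable).mp hf2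
    apply this.congr
    filter_upwards with z
    rw [sq_abs]
  have hint : Integrable (uncurry F) (volume.prod volume) := by
    rw [integrable_prod_iff' hFmeas]
    constructor
    · filter_upwards with z
      have hb : Integrable (fun y => |f z| * (Real.sqrt (2 * Real.pi * w))⁻¹ * gpdf m v y)
          volume := ((integrable_gpdf hv m).const_mul _)
      refine hb.mono ?_ ?_
      · unfold F
        unfold gpdf
        apply Measurable.aestronglyMeasurable
        fun_prop
      · filter_upwards with y
        simp only [uncurry, Real.norm_eq_abs]
        have h1 := gpdf_nonneg m v y
        have h2 := gpdf_nonneg (c * y) w z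
        rw [abs_mul, abs_mul, abs_of_nonneg h1, abs_of_nonneg h2,
          abs_of_nonneg (by positivity : (0:ℝ) ≤ |f z| * (Real.sqrt (2 * Real.pi * w))⁻¹ * gpdf m v y)]
        calc gpdf m v y * (gpdf (c * y) w z * |f z|)
            ≤ gpdf m v y * ((Real.sqrt (2 * Real.pi * w))⁻¹ * |f z|) := by
              apply mul_le_mul_of_nonneg_left _ h1
              exact mul_le_mul_of_nonneg_right (gpdf_le hw _ _) (abs_nonneg _)
          _ = |f z| * (Real.sqrt (2 * Real.pi * w))⁻¹ * gpdf m v y := by ring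
    · have key : ∀ z, ∫ y, ‖F y z‖ = gpdf (c * m) (w + c ^ 2 * v) z * |f z| := by
        intro z
        have : ∀ y, ‖F y z‖ = (gpdf m v y * gpdf (c * y) w z) * |f z| := by
          intro y
          unfold F
          rw [Real.norm_eq_abs, abs_mul, abs_mul,
            abs_of_nonneg (gpdf_nonneg m v y), abs_of_nonneg (gpdf_nonneg (c * y) w z)]
          ring
        simp_rw [this]
        rw [MeasureTheory.integral_mul_const, gpdf_conv hv hw c m z]
      have : Integrable (fun z => gpdf (c * m) (w + c ^ 2 * v) z * |f z|) volume := by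
        rw [← integrable_gaussianReal_iff hwc0]
        exact integrable_of_memL2 ht hwc0 hwc (c * m) hf.abs habs2
      apply this.congr
      filter_upwards with z
      exact (key z).symm
  calc ∫ y, (∫ z, f z ∂(gaussianReal (c * y) w.toNNReal)) ∂(gaussianReal m v.toNNReal)
      = ∫ y, gpdf m v y * ∫ z, f z ∂(gaussianReal (c * y) w.toNNReal) := integral_gaussianReal hv m _
    _ = ∫ y, gpdf m v y * ∫ z, gpdf (c * y) w z * f z := by
        congr 1; ext y
        rw [integral_gaussianReal hw]
    _ = ∫ y, ∫ z, F y z := by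
        congr 1; ext y
        rw [← MeasureTheory.integral_const_mul]
    _ = ∫ z, ∫ y, F y z := integral_integral_swap hint
    _ = ∫ z, gpdf (c * m) (w + c ^ 2 * v) z * f z := by
        congr 1; ext z
        show (∫ y, gpdf m v y * (gpdf (c * y) w z * f z)) = _
        calc ∫ y, gpdf m v y * (gpdf (c * y) w z * f z)
            = ∫ y, (gpdf m v y * gpdf (c * y) w z) * f z := by congr 1; ext y; ring
          _ = (∫ y, gpdf m v y * gpdf (c * y) w z) * f z := MeasureTheory.integral_mul_const _ _
          _ = gpdf (c * m) (w + c ^ 2 * v) z * f z := by rw [gpdf_conv hv hw c m z]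
    _ = ∫ z, f z ∂(gaussianReal (c * m) (w + c ^ 2 * v).toNNReal) :=
        (integral_gaussianReal hwc0 _ _).symm

lemma sq_lt_one_of_Ioo {a : ℝ} (ha : a ∈ Set.Ioo (-1:ℝ) 1) : a ^ 2 < 1 := by
  obtain ⟨h1, h2⟩ := ha
  nlinarith

lemma rho_nonneg (a : ℝ) (n : ℕ) : 0 ≤ a ^ (2 * n) := by
  rw [pow_mul]
  exact pow_nonneg (sq_nonneg a) n

lemma rho_le_one {a : ℝ} (ha : a ∈ Set.Ioo (-1:ℝ) 1) (n : ℕ) : a ^ (2 * n) ≤ 1 := by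
  rw [pow_mul]
  exact pow_le_one₀ (sq_nonneg a) (sq_lt_one_of_Ioo ha).le

lemma rho_lt_one {a : ℝ} (ha : a ∈ Set.Ioo (-1:ℝ) 1) {n : ℕ} (hn : 1 ≤ n) :
    a ^ (2 * n) < 1 := by
  rw [pow_mul]
  exact pow_lt_one₀ (sq_nonneg a) (sq_lt_one_of_Ioo ha) (by omega)

lemma barQfunIter_eq {a σ : ℝ} (ha : a ∈ Set.Ioo (-1:ℝ) 1) (hσ : 0 < σ) {f : ℝ → ℝ}
    (hf : Measurable f)
    (hf2 : MemLp f 2 (gaussianReal 0 (σ ^ 2 / (1 - a ^ 2)).toNNReal)) (n : ℕ) (hn : 1 ≤ n)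
    (x : ℝ) :
    barQfunIter a σ n f x
      = ∫ z, f z ∂(gaussianReal (a ^ n * x)
          ((σ ^ 2 / (1 - a ^ 2)) * (1 - a ^ (2 * n))).toNNReal) := by
  set t := σ ^ 2 / (1 - a ^ 2) with htdef
  have h1a : 0 < 1 - a ^ 2 := by linarith [sq_lt_one_of_Ioo ha]
  have ht : 0 < t := by rw [htdef]; positivity
  have hσ2t : σ ^ 2 = t * (1 - a ^ 2) := by rw [htdef]; field_simp
  induction n, hn using Nat.le_induction generalizing x with
  | base =>
    have hvar : Real.toNNReal (σ ^ 2) = (t * (1 - a ^ (2 * 1))).toNNReal := by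
      rw [hσ2t]
    simp only [barQfunIter, Function.iterate_one, barQfun, pow_one]
    rw [hvar]
  | succ n hn ih =>
    have hvn : 0 < t * (1 - a ^ (2 * n)) := by
      have := rho_lt_one ha hn
      have h0 : 0 < 1 - a ^ (2 * n) := by linarith
      positivity
    have hvsucc : t * (1 - a ^ (2 * n)) + (a ^ n) ^ 2 * σ ^ 2
        = t * (1 - a ^ (2 * (n + 1))) := by
      rw [hσ2t, ← pow_mul, Nat.mul_comm n 2]
      ring
    have hwc : t * (1 - a ^ (2 * n)) + (a ^ n) ^ 2 * σ ^ 2 < 2 * t := by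
      rw [hvsucc]
      have h1 : 0 ≤ a ^ (2 * (n + 1)) := rho_nonneg a (n + 1)
      nlinarith
    have step : barQfunIter a σ (n + 1) f x = barQfun a σ (barQfunIter a σ n f) x := by
      simp only [barQfunIter, Function.iterate_succ_apply']
    rw [step]
    unfold barQfun
    have hinner : (barQfunIter a σ n f)
        = fun y => ∫ z, f z ∂(gaussianReal (a ^ n * y) (t * (1 - a ^ (2 * n))).toNNReal) := by
      ext y
      exact ih y
    rw [hinner]
    have := gauss_comp ht (by positivity : (0:ℝ) < σ ^ 2) hvn hwc (a * x) hf hf2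
    rw [this, hvsucc]
    congr 2
    rw [pow_succ]
    ring

lemma eLpNorm_two_eq {μ : Measure ℝ} {f : ℝ → ℝ} (hf2 : MemLp f 2 μ) :
    eLpNorm f 2 μ = ENNReal.ofReal (Real.sqrt (∫ z, f z ^ 2 ∂μ)) := by
  rw [hf2.eLpNorm_eq_integral_rpow_norm (by norm_num) (by norm_num)]
  congr 1
  have h2 : ((2:ℝ≥0∞)).toReal = (2:ℝ) := by norm_num
  rw [h2]
  rw [show (fun a => ‖f a‖ ^ (2:ℝ)) = fun a => f a ^ 2 from ?_]
  · rw [show ((2:ℝ))⁻¹ = 1/2 by norm_num, ← Real.sqrt_eq_rpow]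
  · ext a
    rw [Real.norm_eq_abs, show ((2:ℝ)) = ((2:ℕ):ℝ) by norm_num, Real.rpow_natCast, sq_abs]

set_option maxHeartbeats 1000000 in
/-- Main estimate, for measurable `f`. -/
lemma main_meas {a σ : ℝ} (ha : a ∈ Set.Ioo (-1:ℝ) 1) (hσ : 0 < σ) {f : ℝ → ℝ}
    (hf : Measurable f)
    (hf2 : MemLp f 2 (gaussianReal 0 (σ ^ 2 / (1 - a ^ 2)).toNNReal)) (n : ℕ) :
    eLpNorm (fun x => barQfunIter a σ n f x
        - ∫ y, f y ∂(gaussianReal 0 (σ ^ 2 / (1 - a ^ 2)).toNNReal)) 2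
        (gaussianReal 0 (σ ^ 2 / (1 - a ^ 2)).toNNReal)
      ≤ ENNReal.ofReal ((2 / Real.sqrt (1 - a ^ 2)) * |a| ^ n)
        * eLpNorm f 2 (gaussianReal 0 (σ ^ 2 / (1 - a ^ 2)).toNNReal) := by
  have h1a : 0 < 1 - a ^ 2 := by linarith [sq_lt_one_of_Ioo ha]
  set t := σ ^ 2 / (1 - a ^ 2) with htdef
  have ht : 0 < t := by rw [htdef]; positivity
  set μ := gaussianReal 0 t.toNNReal with hμdef
  set c := ∫ y, f y ∂μ with hcdef
  set I2 := ∫ z, f z ^ 2 ∂μ with hI2def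
  set H2 := ∫ z, (f z - c) ^ 2 ∂μ with hH2def
  have hI2nn : 0 ≤ I2 := integral_nonneg fun z => sq_nonneg _
  have hH2nn : 0 ≤ H2 := integral_nonneg fun z => sq_nonneg _
  have hint_f2 : Integrable (fun z => f z ^ 2) μ :=
    (memLp_two_iff_integrable_sq hf2.aestronglyMeasurable).mp hf2
  have hint_f : Integrable f μ := by
    have := integrable_of_memL2 ht ht (by linarith) 0 hf hf2
    simpa [hμdef] using this
  have hH2I2 : H2 = I2 - c ^ 2 := by
    calc H2 = ∫ z, (f z ^ 2 - 2 * c * f z) + c ^ 2 ∂μ := by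
          rw [hH2def]; congr 1; ext z; ring
      _ = (∫ z, f z ^ 2 - 2 * c * f z ∂μ) + ∫ _, (c ^ 2 : ℝ) ∂μ :=
          integral_add (hint_f2.sub (hint_f.const_mul _)) (integrable_const _)
      _ = I2 - 2 * c * c + c ^ 2 := by
          rw [integral_sub hint_f2 (hint_f.const_mul _), MeasureTheory.integral_const_mul]
          simp [measure_univ, hI2def, hcdef]
      _ = I2 - c ^ 2 := by ring
  have hH2_le : H2 ≤ I2 := by rw [hH2I2]; nlinarith [sq_nonneg c]
  have hc2 : c ^ 2 ≤ I2 := by nlinarith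
  have heL : eLpNorm f 2 μ = ENNReal.ofReal (Real.sqrt I2) := eLpNorm_two_eq hf2
  have hs1a : 0 < Real.sqrt (1 - a ^ 2) := Real.sqrt_pos.2 h1a
  have hs1a_le : Real.sqrt (1 - a ^ 2) ≤ 1 := by
    have h := Real.sqrt_le_sqrt (show 1 - a ^ 2 ≤ 1 by nlinarith [sq_nonneg a])
    rwa [Real.sqrt_one] at h
  rcases Nat.eq_zero_or_pos n with hn0 | hn1
  · -- n = 0
    subst hn0
    have hiter : barQfunIter a σ 0 f = f := rfl
    rw [hiter]
    have hmem : MemLp (fun x => f x - c) 2 μ := hf2.sub (memLp_const c)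
    rw [eLpNorm_two_eq hmem, heL]
    rw [← ENNReal.ofReal_mul (by positivity)]
    apply ENNReal.ofReal_le_ofReal
    have h1 : Real.sqrt H2 ≤ Real.sqrt I2 := Real.sqrt_le_sqrt hH2_le
    have h2 : (1:ℝ) ≤ 2 / Real.sqrt (1 - a ^ 2) * |a| ^ 0 := by
      rw [pow_zero, mul_one]
      rw [le_div_iff₀ hs1a]
      linarith
    calc Real.sqrt H2 ≤ Real.sqrt I2 := h1
      _ = 1 * Real.sqrt I2 := (one_mul _).symm
      _ ≤ (2 / Real.sqrt (1 - a ^ 2) * |a| ^ 0) * Real.sqrt I2 := by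
          apply mul_le_mul_of_nonneg_right h2 (Real.sqrt_nonneg _)
  · -- n ≥ 1
    set ρ := a ^ (2 * n) with hρdef
    have hρnn : 0 ≤ ρ := rho_nonneg a n
    have hρ1 : ρ < 1 := rho_lt_one ha hn1
    set v := t * (1 - ρ) with hvdef
    have hv : 0 < v := by rw [hvdef]; have : 0 < 1 - ρ := by linarith
                          positivity
    have hvt : v ≤ t := by rw [hvdef]; nlinarith
    have h2tv : 0 < 2 * t - v := by linarith
    -- the chi function
    set K := t / Real.sqrt (v * (2 * t - v)) with hKdef
    have hKnn : 0 < K := by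
      rw [hKdef]
      apply div_pos ht (Real.sqrt_pos.2 (by positivity))
    set χ : ℝ → ℝ := fun x => K * Real.exp (ρ * x ^ 2 / (2 * t - v)) - 1 with hχdef
    have hK1 : 1 ≤ K := by
      rw [hKdef, le_div_iff₀ (Real.sqrt_pos.2 (by positivity))]
      rw [one_mul]
      calc Real.sqrt (v * (2 * t - v)) ≤ Real.sqrt (t ^ 2) := by
            apply Real.sqrt_le_sqrt; nlinarith [sq_nonneg (t - v)]
        _ = t := Real.sqrt_sq ht.le
    have hχnn : ∀ x, 0 ≤ χ x := by
      intro x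
      show 0 ≤ K * Real.exp (ρ * x ^ 2 / (2 * t - v)) - 1
      have h1 : 1 ≤ Real.exp (ρ * x ^ 2 / (2 * t - v)) :=
        Real.one_le_exp (by positivity)
      nlinarith
    -- pointwise bound
    have hptwise : ∀ x, |barQfunIter a σ n f x - c| ≤ Real.sqrt H2 * Real.sqrt (χ x) := by
      intro x
      rw [barQfunIter_eq ha hσ hf hf2 n hn1 x]
      have hCS := pointwise_CS ht hv hvt (a ^ n * x) hf hf2
      have hm2 : (a ^ n * x) ^ 2 = ρ * x ^ 2 := by
        rw [mul_pow, ← pow_mul, Nat.mul_comm n 2, hρdef]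
      rw [hm2] at hCS
      calc |(∫ z, f z ∂(gaussianReal (a ^ n * x) v.toNNReal)) - c|
          ≤ Real.sqrt H2 * Real.sqrt (K * Real.exp (ρ * x ^ 2 / (2 * t - v)) - 1) := hCS
        _ = Real.sqrt H2 * Real.sqrt (χ x) := rfl
    -- integral of chi
    have hveq : v = t * (1 - ρ) := hvdef
    have hχint : Integrable χ μ := by
      have h1 : Integrable (fun x => K * Real.exp (ρ * x ^ 2 / (2 * t - v))) μ := by
        rw [hμdef, integrable_gaussianReal_iff ht]
        simp only [hKdef, hvdef]
        exact integrable_chi ht hρnn hρ1 _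
      exact h1.sub (integrable_const 1)
    have hχval : ∫ x, χ x ∂μ = 1 / (1 - ρ) - 1 := by
      have h1 : ∫ x, K * Real.exp (ρ * x ^ 2 / (2 * t - v)) ∂μ = 1 / (1 - ρ) := by
        rw [hμdef, integral_gaussianReal ht]
        simp only [hKdef, hvdef]
        exact integral_chi ht hρnn hρ1
      have h2 : Integrable (fun x => K * Real.exp (ρ * x ^ 2 / (2 * t - v))) μ := by
        rw [hμdef, integrable_gaussianReal_iff ht]
        simp only [hKdef, hvdef]
        exact integrable_chi ht hρnn hρ1 _
      have hsplit : ∫ x, χ x ∂μ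
          = (∫ x, K * Real.exp (ρ * x ^ 2 / (2 * t - v)) ∂μ) - ∫ _, (1:ℝ) ∂μ := by
        rw [← integral_sub h2 (integrable_const 1)]
      rw [hsplit, h1]
      simp [measure_univ]
    -- the dominating function B
    set B : ℝ → ℝ := fun x => Real.sqrt H2 * Real.sqrt (χ x) with hBdef
    have hχmeas : Measurable χ := by
      rw [hχdef]; fun_prop
    have hBmem : MemLp B 2 μ := by
      rw [memLp_two_iff_integrable_sq]
      · have : Integrable (fun x => H2 * χ x) μ := hχint.const_mul _
        apply this.congr
        filter_upwards with x
        show H2 * χ x = (Real.sqrt H2 * Real.sqrt (χ x)) ^ 2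
        rw [mul_pow, Real.sq_sqrt hH2nn, Real.sq_sqrt (hχnn x)]
      · exact (measurable_const.mul (hχmeas.sqrt)).aestronglyMeasurable
    have hmono : eLpNorm (fun x => barQfunIter a σ n f x - c) 2 μ ≤ eLpNorm B 2 μ := by
      apply eLpNorm_mono
      intro x
      rw [Real.norm_eq_abs, Real.norm_eq_abs]
      refine (hptwise x).trans ?_
      exact le_abs_self _
    refine hmono.trans ?_
    rw [eLpNorm_two_eq hBmem, heL]
    have hB2 : ∫ z, B z ^ 2 ∂μ = H2 * (1 / (1 - ρ) - 1) := by
      rw [← hχval, ← MeasureTheory.integral_const_mul]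
      congr 1; ext x
      show (Real.sqrt H2 * Real.sqrt (χ x)) ^ 2 = H2 * χ x
      rw [mul_pow, Real.sq_sqrt hH2nn, Real.sq_sqrt (hχnn x)]
    rw [hB2, ← ENNReal.ofReal_mul (by positivity)]
    apply ENNReal.ofReal_le_ofReal
    -- final real arithmetic
    have hρa2 : ρ ≤ a ^ 2 := by
      rw [hρdef, pow_mul]
      calc (a ^ 2) ^ n ≤ (a ^ 2) ^ 1 :=
            pow_le_pow_of_le_one (sq_nonneg a) (sq_lt_one_of_Ioo ha).le hn1
        _ = a ^ 2 := pow_one _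
    have hCn : 1 / (1 - ρ) - 1 ≤ ρ / (1 - a ^ 2) := by
      have h1 : 1 / (1 - ρ) - 1 = ρ / (1 - ρ) := by
        have : (1:ℝ) - ρ ≠ 0 := by linarith
        field_simp
        ring
      rw [h1]
      exact div_le_div₀ hρnn le_rfl h1a (by linarith)
    have hCnn : 0 ≤ 1 / (1 - ρ) - 1 := by
      have h2 : 1 ≤ 1 / (1 - ρ) := by
        rw [le_div_iff₀ (by linarith : (0:ℝ) < 1 - ρ)]
        linarith
      linarith
    calc Real.sqrt (H2 * (1 / (1 - ρ) - 1))
        ≤ Real.sqrt (I2 * (ρ / (1 - a ^ 2))) := by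
          apply Real.sqrt_le_sqrt
          apply mul_le_mul hH2_le hCn hCnn hI2nn
      _ = Real.sqrt I2 * (Real.sqrt ρ / Real.sqrt (1 - a ^ 2)) := by
          rw [Real.sqrt_mul hI2nn, Real.sqrt_div hρnn]
      _ = Real.sqrt I2 * (|a| ^ n / Real.sqrt (1 - a ^ 2)) := by
          rw [hρdef, show a ^ (2 * n) = (a ^ n) ^ 2 by rw [← pow_mul, Nat.mul_comm],
            Real.sqrt_sq_eq_abs, abs_pow]
      _ = (|a| ^ n / Real.sqrt (1 - a ^ 2)) * Real.sqrt I2 := by ring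
      _ ≤ (2 / Real.sqrt (1 - a ^ 2) * |a| ^ n) * Real.sqrt I2 := by
          apply mul_le_mul_of_nonneg_right ?_ (Real.sqrt_nonneg _)
          rw [div_mul_eq_mul_div]
          apply (div_le_div_iff_of_pos_right hs1a).mpr
          have := pow_nonneg (abs_nonneg a) n
          linarith

/-- For the symmetric BAR kernel `𝒬(x,·) = 𝒩(ax, σ²)`, `a ∈ (-1,1)`, `σ > 0`, with
invariant measure `μ = 𝒩(0, σ²/(1-a²))`: `𝒬` is `L²(μ)`-exponentially convergent with
rate `|a|`, i.e. there exists a finite constant `M` with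
`‖𝒬ⁿ f − ⟨μ,f⟩‖_{L²(μ)} ≤ M |a|ⁿ ‖f‖_{L²(μ)}` for all `f ∈ L²(μ)` and `n ∈ ℕ`. -/
theorem barQ_L2_exponentially_convergent (a σ : ℝ)
    (ha : a ∈ Set.Ioo (-1 : ℝ) 1) (hσ : 0 < σ) :
    ∃ M : ℝ, ∀ f : ℝ → ℝ,
      MemLp f 2 (gaussianReal 0 (Real.toNNReal (σ ^ 2 / (1 - a ^ 2)))) → ∀ n : ℕ,
        eLpNorm
            (fun x => barQfunIter a σ n f x
              - ∫ y, f y ∂(gaussianReal 0 (Real.toNNReal (σ ^ 2 / (1 - a ^ 2)))))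
            2 (gaussianReal 0 (Real.toNNReal (σ ^ 2 / (1 - a ^ 2))))
          ≤ ENNReal.ofReal (M * |a| ^ n)
            * eLpNorm f 2 (gaussianReal 0 (Real.toNNReal (σ ^ 2 / (1 - a ^ 2)))) := by
  have h1a : 0 < 1 - a ^ 2 := by linarith [sq_lt_one_of_Ioo ha]
  have ht : 0 < σ ^ 2 / (1 - a ^ 2) := by positivity
  set μ := gaussianReal 0 (Real.toNNReal (σ ^ 2 / (1 - a ^ 2))) with hμdef
  refine ⟨2 / Real.sqrt (1 - a ^ 2), ?_⟩
  intro f hf2 n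
  set fm := hf2.aestronglyMeasurable.mk f with hfmdef
  have hfm : Measurable fm := hf2.aestronglyMeasurable.stronglyMeasurable_mk.measurable
  have hae_mu : f =ᵐ[μ] fm := hf2.aestronglyMeasurable.ae_eq_mk
  have htne : Real.toNNReal (σ ^ 2 / (1 - a ^ 2)) ≠ 0 := by
    simp only [ne_eq, Real.toNNReal_eq_zero, not_le]
    exact ht
  have hvol_ac : volume ≪ μ := gaussianReal_absolutelyContinuous' 0 htne
  have hae_vol : f =ᵐ[volume] fm := hae_mu.filter_mono hvol_ac.ae_le
  have hfm2 : MemLp fm 2 μ := hf2.ae_eq hae_mu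
  have hc_eq : ∫ y, f y ∂μ = ∫ y, fm y ∂μ := integral_congr_ae hae_mu
  have hσ2ne : Real.toNNReal (σ ^ 2) ≠ 0 := by
    simp only [ne_eq, Real.toNNReal_eq_zero, not_le]
    positivity
  have hQeq : barQfun a σ f = barQfun a σ fm := by
    funext x
    unfold barQfun
    apply integral_congr_ae
    exact hae_vol.filter_mono (gaussianReal_absolutelyContinuous _ hσ2ne).ae_le
  have hRHSeq : eLpNorm f 2 μ = eLpNorm fm 2 μ := eLpNorm_congr_ae hae_mu
  have main := main_meas ha hσ hfm hfm2 n
  rcases Nat.eq_zero_or_pos n with h0 | h1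
  · subst h0
    have hLHS : eLpNorm (fun x => barQfunIter a σ 0 f x - ∫ y, f y ∂μ) 2 μ
        = eLpNorm (fun x => barQfunIter a σ 0 fm x - ∫ y, fm y ∂μ) 2 μ := by
      apply eLpNorm_congr_ae
      filter_upwards [hae_mu] with x hx
      simp only [barQfunIter, Function.iterate_zero, id_eq]
      rw [hx, hc_eq]
    rw [hLHS, hRHSeq]
    exact main
  · have hiter : barQfunIter a σ n f = barQfunIter a σ n fm := by
      obtain ⟨j, rfl⟩ : ∃ j, n = j + 1 := ⟨n - 1, by omega⟩
      unfold barQfunIter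
      rw [Function.iterate_succ_apply, Function.iterate_succ_apply, hQeq]
    rw [hiter, hc_eq, hRHSeq]
    exact main
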